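/- Let (T,ℓ) be a degree tree and let v, v' be two distinct nodes of T with v preceding v' in preorder; let w and w' be the certificates of v and v' respectively. Then w is not strictly between v' and w' in preorder; furthermore, if v' ≠ w', then w ≠ v'. -/

import Mathlib

/-! ### Dyck paths: `true` = up step, `false` = down step -/

/-- A Dyck word: every prefix has at least as many up steps as down steps,
and the whole word has equally many. -/
def IsDyck (w : List Bool) : Prop :=
  (∀ k ≤ w.length, (w.take k).count false ≤ (w.take k).count true) ∧
    w.count false = w.count true

instance : DecidablePred IsDyck := fun w => by
  unfold IsDyck; infer_instance

/-- `w` is a Dyck path of size `n` (length `2n`). -/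
def IsDyckOfSize (n : ℕ) (w : List Bool) : Prop := IsDyck w ∧ w.length = 2 * n

/-- The 0-based position of the `i`-th (1-based) up step of `w`. -/
def upPos (w : List Bool) (i : ℕ) : ℕ :=
  ((List.range w.length).filter (fun p => w.getD p false)).getD (i - 1) w.length

/-- The 0-based position of the down step matching the `i`-th (1-based) up step:
the unique down step such that the factor strictly between them is a Dyck word. -/
def matchPos (w : List Bool) (i : ℕ) : ℕ :=
  ((List.range w.length).filter (fun q =>
      decide (upPos w i < q) && !(w.getD q true) &&
        decide (IsDyck ((w.drop (upPos w i + 1)).take (q - (upPos w i + 1)))))).headD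
    w.length

/-- Bracket vector: `bracket w i` is the size (half-length) of the factor of `w`
strictly between the `i`-th up step and its matching down step. -/
def bracket (w : List Bool) (i : ℕ) : ℕ := (matchPos w i - (upPos w i + 1)) / 2

/-- The factor of `w` strictly between the `i`-th up step and its matching down step. -/
def Pslice (w : List Bool) (i : ℕ) : List Bool :=
  (w.drop (upPos w i + 1)).take (matchPos w i - (upPos w i + 1))

/-- `Type(w)_i`: `1` if the `i`-th up step is immediately followed by an up step, else `0`. -/
def typ (w : List Bool) (i : ℕ) : ℕ := if w.getD (upPos w i + 1) false then 1 else 0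

/-- Number of rising contacts: up steps starting on the x-axis. -/
def risingContacts (w : List Bool) : ℕ :=
  ((List.range w.length).filter (fun p =>
      w.getD p false && ((w.take p).count true == (w.take p).count false))).length

/-- Tamari order via bracket vectors. -/
def TamariLE (n : ℕ) (P Q : List Bool) : Prop :=
  ∀ i, 1 ≤ i → i ≤ n → bracket P i ≤ bracket Q i

/-- A Tamari interval of size `n`. -/
def IsTamariInterval (n : ℕ) (P Q : List Bool) : Prop :=
  IsDyckOfSize n P ∧ IsDyckOfSize n Q ∧ TamariLE n P Q

/-- A new interval of size `n` (Chapoton): `V_Q(1)` is maximal (the source states this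
condition as `V_Q(1) = n`, with its convention relating trees of size `n` to intervals of
size `n + 1`; for the strict-factor bracket vector of a path of size `n` this maximal
value is `n - 1`), and `V_Q(i) > 0` implies `V_P(i) ≤ V_Q(i+1)`. -/
def IsNewInterval (n : ℕ) (P Q : List Bool) : Prop :=
  IsTamariInterval n P Q ∧ bracket Q 1 + 1 = n ∧
    ∀ i, 1 ≤ i → i ≤ n → 0 < bracket Q i → bracket P i ≤ bracket Q (i + 1)

/-- Number of indices `1 ≤ i ≤ n` with `(Type(P)_i, Type(Q)_i) = (0,0)`. -/
def c00 (n : ℕ) (P Q : List Bool) : ℕ :=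
  ((Finset.Icc 1 n).filter (fun i => typ P i = 0 ∧ typ Q i = 0)).card

/-- Number of indices `1 ≤ i ≤ n` with `(Type(P)_i, Type(Q)_i) = (0,1)`. -/
def c01 (n : ℕ) (P Q : List Bool) : ℕ :=
  ((Finset.Icc 1 n).filter (fun i => typ P i = 0 ∧ typ Q i = 1)).card

/-- Number of indices `1 ≤ i ≤ n` with `(Type(P)_i, Type(Q)_i) = (1,1)`. -/
def c11 (n : ℕ) (P Q : List Bool) : ℕ :=
  ((Finset.Icc 1 n).filter (fun i => typ P i = 1 ∧ typ Q i = 1)).card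

/-! ### Plane trees with integer node labels -/

/-- A plane tree whose nodes carry labels in `ℤ`. -/
inductive LTree : Type where
  | node : ℤ → List LTree → LTree

instance : Inhabited LTree := ⟨.node 0 []⟩

/-- The label of the root. -/
def LTree.label : LTree → ℤ
  | .node l _ => l

/-- The list of children (subtrees) of the root, from left to right. -/
def LTree.children : LTree → List LTree
  | .node _ ts => ts

/-- Whether the root is a leaf. -/
def LTree.isLeaf (t : LTree) : Bool := t.children.isEmpty

mutual
/-- The size of a tree = number of edges. -/
def LTree.size : LTree → ℕ
  | .node _ ts => LTree.sizeList ts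
def LTree.sizeList : List LTree → ℕ
  | [] => 0
  | t :: ts => 1 + t.size + LTree.sizeList ts
end

/-- The label `a` of the leftmost descending edge of the root (0 for a leaf),
recovered from the node labels: `ℓ(v) = k - a + ℓ(v₁) + ⋯ + ℓ(v_k)`. -/
def LTree.aVal : LTree → ℤ
  | .node _ [] => 0
  | .node l ts => (ts.length : ℤ) + (ts.map LTree.label).sum - l

/-- `(T, ℓ)` is a degree tree: leaves are labeled `0` and every internal node `v`
with children `v₁, …, v_k` satisfies `ℓ(v) = k - a + ℓ(v₁) + ⋯ + ℓ(v_k)` for some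
`0 ≤ a ≤ ℓ(v₁)`. -/
inductive IsDegreeTree : LTree → Prop where
  | leaf : IsDegreeTree (.node 0 [])
  | internal (l a : ℤ) (t₁ : LTree) (ts : List LTree)
      (h₁ : IsDegreeTree t₁) (h : ∀ t ∈ ts, IsDegreeTree t)
      (ha₀ : 0 ≤ a) (ha₁ : a ≤ t₁.label)
      (hl : l = ((1 + ts.length : ℕ) : ℤ) - a + (t₁.label + (ts.map LTree.label).sum)) :
      IsDegreeTree (.node l (t₁ :: ts))

mutual
/-- The list of all subtrees of `T` (one for each node), in preorder. -/
def LTree.preSub : LTree → List LTree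
  | .node l ts => .node l ts :: LTree.preSubList ts
def LTree.preSubList : List LTree → List LTree
  | [] => []
  | t :: ts => t.preSub ++ LTree.preSubList ts
end

/-- The subtree induced by the `i`-th node (0-based) of `T` in preorder. -/
def LTree.nth (T : LTree) (i : ℕ) : LTree := T.preSub.getD i default

mutual
/-- Sum of the edge labels `ℓ_Λ(e)` over all edges of the tree (the leftmost
descending edge of each internal node carries `a`, all other edges carry `0`). -/
def LTree.eSum : LTree → ℤ
  | .node l ts => LTree.aVal (.node l ts) + LTree.eSumList ts
def LTree.eSumList : List LTree → ℤ
  | [] => 0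
  | t :: ts => t.eSum + LTree.eSumList ts
end

mutual
/-- The Dyck word of a plane tree under the classical bijection
(recording the depth evolution along the preorder traversal). -/
def LTree.toDyck : LTree → List Bool
  | .node _ ts => LTree.toDyckList ts
def LTree.toDyckList : List LTree → List Bool
  | [] => []
  | t :: ts => true :: (t.toDyck ++ (false :: LTree.toDyckList ts))
end

/-- The upper path `Q = u Q' d` of `I_T`, where `Q'` corresponds to `T`. -/
def Qpath (T : LTree) : List Bool := true :: (T.toDyck ++ [false])

/-! ### The certificate process -/

/-- The least index `> i` not colored red. -/
def nextBlack (red : Finset ℕ) (i : ℕ) : ℕ :=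
  Nat.find (p := fun j => i < j ∧ j ∉ red) (by
    refine ⟨red.sup id + i + 1, by omega, fun h => ?_⟩
    have := Finset.le_sup (f := id) h
    simp only [id_eq] at this
    omega)

/-- The `k`-th black (non-red) index after `i`. -/
def kthBlack (red : Finset ℕ) (i : ℕ) : ℕ → ℕ
  | 0 => i
  | k + 1 => nextBlack red (kthBlack red i k)

/-- The set of red nodes after processing the `k` nodes `n, n-1, …, n-k+1`
in reverse preorder; at the step for a non-leaf node `i` the first `r i` black
nodes after `i` are colored red. -/
def redGo (r : ℕ → ℕ) (lf : ℕ → Bool) (n : ℕ) : ℕ → Finset ℕ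
  | 0 => ∅
  | k + 1 =>
      let s := redGo r lf n k
      let i := n - k
      if lf i then s else s ∪ (Finset.Icc 1 (r i)).image (kthBlack s i)

/-- The certificate of node `i`: itself if `i` is a leaf, otherwise the node just
before the `(r i + 1)`-st black node after `i` at the step for `i`. -/
def certAux (r : ℕ → ℕ) (lf : ℕ → Bool) (n i : ℕ) : ℕ :=
  if lf i then i else kthBlack (redGo r lf n (n - i)) i (r i + 1) - 1

/-- The certificate (as a preorder index) of the `i`-th preorder node of `T`. -/
def cert (T : LTree) (i : ℕ) : ℕ :=
  certAux (fun j => (T.nth j).aVal.toNat) (fun j => (T.nth j).isLeaf) T.size i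

/-- `c(i)`: the number of nodes of `T` whose certificate is node `i`. -/
def certCount (T : LTree) (i : ℕ) : ℕ :=
  ((List.range (T.size + 1)).filter (fun j => cert T j == i)).length

/-- The lower path of `I_T`: concatenation of `u d^{c(v)}` over nodes in preorder. -/
def Ppath (T : LTree) : List Bool :=
  ((List.range (T.size + 1)).map (fun i => true :: List.replicate (certCount T i) false)).flatten

/-! ### Statistics on degree trees -/

/-- Number of leaf nodes. -/
def lnode (T : LTree) : ℕ := (T.preSub.filter (fun t => t.isLeaf)).length

/-- Number of zero nodes: internal nodes whose leftmost descending edge is labeled `0`. -/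
def znode (T : LTree) : ℕ :=
  (T.preSub.filter (fun t => !t.isLeaf && decide (t.aVal = 0))).length

/-- Number of positive nodes: internal nodes whose leftmost descending edge has positive label. -/
def pnode (T : LTree) : ℕ :=
  (T.preSub.filter (fun t => !t.isLeaf && decide (0 < t.aVal))).length

/-! ### Unlabeled shapes (for fixing `T` while varying `ℓ`) -/

/-- An unlabeled plane tree. -/
inductive PShape : Type where
  | node : List PShape → PShape

mutual
/-- The underlying unlabeled plane tree of a labeled tree. -/
def LTree.shape : LTree → PShape
  | .node _ ts => .node (LTree.shapeList ts)
def LTree.shapeList : List LTree → List PShape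
  | [] => []
  | t :: ts => t.shape :: LTree.shapeList ts
end

/-- The defining relations of `T_I`: `(T, ℓ) = T_I([P,Q])` for a new interval
`[P,Q]` of size `n+1`, i.e. `T` corresponds to `Q'` (where `Q = uQ'd`) under the
classical bijection, and the leftmost descending edge of the `i`-th preorder node
is labeled by the number of rising contacts of the factor of `P` strictly between
the `(i+1)`-st up step and its matching down step. -/
def TIrel (n : ℕ) (P Q : List Bool) (T : LTree) : Prop :=
  IsDegreeTree T ∧ T.size = n ∧ Q = Qpath T ∧
    ∀ i ≤ n, (T.nth i).children ≠ [] →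
      (T.nth i).aVal = (risingContacts (Pslice P (i + 1)) : ℤ)

lemma nextBlack_spec (red : Finset ℕ) (i : ℕ) :
    i < nextBlack red i ∧ nextBlack red i ∉ red := by
  unfold nextBlack; exact Nat.find_spec (p := fun j => i < j ∧ j ∉ red) _

lemma nextBlack_min' (red : Finset ℕ) (i m : ℕ) (h1 : i < m) (h2 : m ∉ red) :
    nextBlack red i ≤ m := Nat.find_min' _ ⟨h1, h2⟩

lemma kthBlack_ge (red : Finset ℕ) (i k : ℕ) : i ≤ kthBlack red i k := by
  induction k with
  | zero => simp [kthBlack]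
  | succ k ih =>
    have := (nextBlack_spec red (kthBlack red i k)).1
    simp only [kthBlack]
    omega

lemma kthBlack_gt (red : Finset ℕ) (i k : ℕ) : i < kthBlack red i (k + 1) := by
  have := (nextBlack_spec red (kthBlack red i k)).1
  have := kthBlack_ge red i k
  simp only [kthBlack]
  omega

lemma kthBlack_not_mem (red : Finset ℕ) (i k : ℕ) :
    kthBlack red i (k + 1) ∉ red :=
  (nextBlack_spec red (kthBlack red i k)).2

lemma black_eq_kth (red : Finset ℕ) (i m t : ℕ) (hm : m ∉ red) (h1 : i < m)
    (h2 : m ≤ kthBlack red i t) : ∃ t', 1 ≤ t' ∧ t' ≤ t ∧ m = kthBlack red i t' := by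
  induction t with
  | zero => simp only [kthBlack] at h2; omega
  | succ t ih =>
    rcases le_or_gt m (kthBlack red i t) with h | h
    · obtain ⟨t', ht1, ht2, ht3⟩ := ih h
      exact ⟨t', ht1, by omega, ht3⟩
    · have hle := nextBlack_min' red (kthBlack red i t) m h hm
      refine ⟨t + 1, by omega, le_refl _, ?_⟩
      simp only [kthBlack] at h2 ⊢
      omega

lemma redGo_succ_subset (r : ℕ → ℕ) (lf : ℕ → Bool) (n k : ℕ) :
    redGo r lf n k ⊆ redGo r lf n (k + 1) := by
  simp only [redGo]
  split
  · exact subset_rfl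
  · exact Finset.subset_union_left

lemma redGo_subset (r : ℕ → ℕ) (lf : ℕ → Bool) (n : ℕ) {k k' : ℕ} (h : k ≤ k') :
    redGo r lf n k ⊆ redGo r lf n k' := by
  induction k' with
  | zero => simp_all
  | succ k' ih =>
    rcases Nat.lt_or_ge k (k' + 1) with h' | h'
    · exact (ih (by omega)).trans (redGo_succ_subset r lf n k')
    · have : k = k' + 1 := by omega
      subst this; exact subset_rfl

lemma interval_red (r : ℕ → ℕ) (lf : ℕ → Bool) (n j m : ℕ) (hj : j ≤ n)
    (hlf : lf j = false) (hm1 : j < m)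
    (hm2 : m < kthBlack (redGo r lf n (n - j)) j (r j + 1)) :
    m ∈ redGo r lf n (n - j + 1) := by
  set s := redGo r lf n (n - j) with hs
  by_cases hms : m ∈ s
  · exact redGo_succ_subset r lf n (n - j) hms
  · have hle : m ≤ kthBlack s j (r j) := by
      by_contra h
      have := nextBlack_min' s (kthBlack s j (r j)) m (by omega) hms
      simp only [kthBlack] at hm2
      omega
    obtain ⟨t', ht1, ht2, ht3⟩ := black_eq_kth s j m (r j) hms hm1 hle
    have hnj : n - (n - j) = j := by omega
    simp only [redGo, hnj, hlf, ← hs]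
    simp only [Bool.false_eq_true, if_false, Finset.mem_union, Finset.mem_image]
    exact Or.inr ⟨t', Finset.mem_Icc.mpr ⟨ht1, ht2⟩, ht3.symm⟩

lemma certAux_ge (r : ℕ → ℕ) (lf : ℕ → Bool) (n i : ℕ) : i ≤ certAux r lf n i := by
  unfold certAux
  split
  · exact le_refl _
  · have := kthBlack_gt (redGo r lf n (n - i)) i (r i)
    omega

lemma certAux_main (r : ℕ → ℕ) (lf : ℕ → Bool) (n i j : ℕ) (hij : i < j) (hj : j ≤ n) :
    ¬(j < certAux r lf n i ∧ certAux r lf n i < certAux r lf n j) ∧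
      (certAux r lf n j ≠ j → certAux r lf n i ≠ j) := by
  by_cases hi : lf i = true
  · have hci : certAux r lf n i = i := by simp [certAux, hi]
    exact ⟨fun ⟨h1, _⟩ => by omega, fun _ => by omega⟩
  · have hi' : lf i = false := by simpa using hi
    set s := redGo r lf n (n - i) with hs
    have hci : certAux r lf n i = kthBlack s i (r i + 1) - 1 := by
      simp [certAux, hi', hs]
    have hBgt : i < kthBlack s i (r i + 1) := kthBlack_gt s i (r i)
    have hBnm : kthBlack s i (r i + 1) ∉ s := kthBlack_not_mem s i (r i)
    have hkey : ∀ m, j < m → m ≤ certAux r lf n j → m ∈ s := by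
      intro m hm1 hm2
      have hj' : lf j = false := by
        by_contra h
        have hjt : lf j = true := by simpa using h
        have : certAux r lf n j = j := by simp [certAux, hjt]
        omega
      have hcj : certAux r lf n j =
          kthBlack (redGo r lf n (n - j)) j (r j + 1) - 1 := by
        simp [certAux, hj']
      have hm2' : m < kthBlack (redGo r lf n (n - j)) j (r j + 1) := by
        have := kthBlack_gt (redGo r lf n (n - j)) j (r j)
        omega
      exact redGo_subset r lf n (by omega : n - j + 1 ≤ n - i)
        (interval_red r lf n j m hj hj' hm1 hm2')
    constructor
    · rintro ⟨h1, h2⟩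
      exact hBnm (hkey (kthBlack s i (r i + 1)) (by omega) (by omega))
    · intro hjj hij'
      have hge : j ≤ certAux r lf n j := certAux_ge r lf n j
      have hB : kthBlack s i (r i + 1) = j + 1 := by omega
      exact hBnm (by rw [hB]; exact hkey (j + 1) (by omega) (by omega))

theorem stmt6 (T : LTree) (hT : IsDegreeTree T) (i j : ℕ) (hij : i < j)
    (hj : j ≤ T.size) :
    ¬(j < cert T i ∧ cert T i < cert T j) ∧ (cert T j ≠ j → cert T i ≠ j) :=
  certAux_main _ _ _ i j hij hj
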